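/- The linear map from gl(7,ℝ) = End(ℝ⁷) to Λ³(ℝ⁷)* given by the infinitesimal action A ↦ −(φ₀(A·, ·, ·) + φ₀(·, A·, ·) + φ₀(·, ·, A·)) on the standard G₂ 3-form φ₀ is surjective. (Consequently the GL(7,ℝ)-orbit of φ₀ is open in Λ³(ℝ⁷)*.) -/

import Mathlib

/-- The 3-form `dxⁱ ∧ dxʲ ∧ dxᵏ` on `ℝ⁷`, as an alternating map:
`(u,v,w) ↦ det [[uᵢ,uⱼ,uₖ],[vᵢ,vⱼ,vₖ],[wᵢ,wⱼ,wₖ]]`. -/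
noncomputable def d3 (i j k : Fin 7) : AlternatingMap ℝ (Fin 7 → ℝ) ℝ (Fin 3) :=
  ((Pi.basisFun ℝ (Fin 3)).det).compLinearMap
    (LinearMap.pi fun m : Fin 3 => LinearMap.proj (![i, j, k] m))

/-- The standard `G₂` 3-form
`φ₀ = dx^{123} + dx^{145} + dx^{167} + dx^{246} − dx^{257} − dx^{347} − dx^{356}`
(0-indexed coordinates), as an alternating 3-form on `ℝ⁷`. -/
noncomputable def phi0 : AlternatingMap ℝ (Fin 7 → ℝ) ℝ (Fin 3) :=
  d3 0 1 2 + d3 0 3 4 + d3 0 5 6 + d3 1 3 5 - d3 1 4 6 - d3 2 3 6 - d3 2 4 5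


lemma d3_apply (i j k : Fin 7) (u v w : Fin 7 → ℝ) :
    d3 i j k ![u, v, w] =
      u i * v j * w k - u i * v k * w j - u j * v i * w k
        + u j * v k * w i + u k * v i * w j - u k * v j * w i := by
  simp [d3, Module.Basis.det_apply, Matrix.det_fin_three, Pi.basisFun_repr, Module.Basis.toMatrix_apply, -Pi.basisFun_det]
  ring



/-- Infinitesimal action of `A` on an alternating 3-form, as a multilinear map. -/
noncomputable def Dmul (A : Module.End ℝ (Fin 7 → ℝ))
    (f : AlternatingMap ℝ (Fin 7 → ℝ) ℝ (Fin 3)) :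
    MultilinearMap ℝ (fun _ : Fin 3 => (Fin 7 → ℝ)) ℝ :=
  ∑ k : Fin 3, f.toMultilinearMap.compLinearMap
    (fun i => if i = k then A else LinearMap.id)

lemma Dmul_apply (A : Module.End ℝ (Fin 7 → ℝ))
    (f : AlternatingMap ℝ (Fin 7 → ℝ) ℝ (Fin 3)) (m : Fin 3 → (Fin 7 → ℝ)) :
    Dmul A f m = ∑ k : Fin 3, f (fun i => if i = k then A (m i) else m i) := by
  simp only [Dmul, MultilinearMap.sum_apply, MultilinearMap.compLinearMap_apply,
    AlternatingMap.coe_multilinearMap]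
  refine Finset.sum_congr rfl fun k _ => congrArg f ?_
  funext i; by_cases h : i = k <;> simp [h]

lemma Dmul_alt (A : Module.End ℝ (Fin 7 → ℝ))
    (f : AlternatingMap ℝ (Fin 7 → ℝ) ℝ (Fin 3)) (m : Fin 3 → (Fin 7 → ℝ))
    (i j : Fin 3) (hm : m i = m j) (hij : i ≠ j) : Dmul A f m = 0 := by
  rw [Dmul_apply]
  rw [← Finset.sum_add_sum_compl ({i, j} : Finset (Fin 3))]
  rw [Finset.sum_pair hij]
  have h1 : (fun l => if l = i then A (m l) else m l) =
      (fun l => if l = j then A (m l) else m l) ∘ Equiv.swap i j := by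
    funext l
    rcases eq_or_ne l i with rfl | hli
    · simp [Equiv.swap_apply_left, hij, hm]
    · rcases eq_or_ne l j with rfl | hlj
      · simp [Equiv.swap_apply_right, hij, hij.symm, hm.symm]
      · simp [Equiv.swap_apply_of_ne_of_ne hli hlj, hli, hlj]
  rw [h1, f.map_swap _ hij]
  have h2 : ∑ k ∈ ({i, j} : Finset (Fin 3))ᶜ,
      f (fun l => if l = k then A (m l) else m l) = 0 := by
    refine Finset.sum_eq_zero fun k hk => ?_
    simp only [Finset.mem_compl, Finset.mem_insert, Finset.mem_singleton, not_or] at hk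
    exact f.map_eq_zero_of_eq _ (by simp [Ne.symm hk.1, Ne.symm hk.2, hm]) hij
  rw [h2]
  ring

noncomputable def Dalt (A : Module.End ℝ (Fin 7 → ℝ))
    (f : AlternatingMap ℝ (Fin 7 → ℝ) ℝ (Fin 3)) :
    AlternatingMap ℝ (Fin 7 → ℝ) ℝ (Fin 3) :=
  { Dmul A f with
    map_eq_zero_of_eq' := fun m i j hm hij => Dmul_alt A f m i j hm hij }

lemma Dalt_apply (A : Module.End ℝ (Fin 7 → ℝ))
    (f : AlternatingMap ℝ (Fin 7 → ℝ) ℝ (Fin 3)) (u v w : Fin 7 → ℝ) :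
    Dalt A f ![u, v, w] = f ![A u, v, w] + f ![u, A v, w] + f ![u, v, A w] := by
  show Dmul A f ![u, v, w] = _
  rw [Dmul_apply, Fin.sum_univ_three]
  congr 1
  · congr 1
    · congr 1
      funext i; fin_cases i <;> simp
    · congr 1
      funext i; fin_cases i <;> simp
  · congr 1
    funext i; fin_cases i <;> simp

/-- ext for alternating 3-forms on ℝ⁷ via sorted basis triples -/
lemma ext_sorted {f g : AlternatingMap ℝ (Fin 7 → ℝ) ℝ (Fin 3)}
    (h : ∀ a b c : Fin 7, a < b → b < c →
      f ![Pi.single a 1, Pi.single b 1, Pi.single c 1]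
        = g ![Pi.single a 1, Pi.single b 1, Pi.single c 1]) : f = g := by
  refine Module.Basis.ext_alternating (Pi.basisFun ℝ (Fin 7)) fun v hv => ?_
  obtain ⟨σ, hσ⟩ : ∃ σ : Equiv.Perm (Fin 3), StrictMono (v ∘ σ) := by
    refine ⟨Tuple.sort v, ?_⟩
    exact (Tuple.comp_sort_eq_comp_iff_monotone.mpr (Tuple.monotone_sort v)).symm ▸
      ((Tuple.monotone_sort v).strictMono_of_injective (hv.comp (Equiv.injective _)))
  have hv' : (fun i => (Pi.basisFun ℝ (Fin 7)) (v i))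
      = (fun i => (Pi.basisFun ℝ (Fin 7)) ((v ∘ σ) i)) ∘ σ.symm := by
    funext i; simp
  rw [hv', f.map_perm, g.map_perm]
  congr 1
  have h3 : (fun i => (Pi.basisFun ℝ (Fin 7)) ((v ∘ σ) i)) =
      ![Pi.single (v (σ 0)) 1, Pi.single (v (σ 1)) 1, Pi.single (v (σ 2)) 1] := by
    funext i; fin_cases i <;> simp [Pi.basisFun_apply]
  rw [h3]
  exact h _ _ _ (hσ (by decide : (0:Fin 3) < 1)) (hσ (by decide : (1:Fin 3) < 2))


lemma mulVecLin_single (M : Matrix (Fin 7) (Fin 7) ℝ) (a : Fin 7) :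
    M.mulVecLin (Pi.single a 1) = fun i => M i a := by
  funext i
  simp [Matrix.mulVecLin, Matrix.mulVec_single]

/-- Explicit right inverse of the infinitesimal action, fed by the values
`t a b c` of the target 3-form on sorted basis triples. -/
noncomputable def solM (t : Fin 7 → Fin 7 → Fin 7 → ℝ) : Matrix (Fin 7) (Fin 7) ℝ :=
  !![(- 2 * t 0 1 2 - 2 * t 0 3 4 - 2 * t 0 5 6 + t 1 3 5 - t 1 4 6 - t 2 3 6 - t 2 4 5) / 6, (- t 0 3 5 + t 0 4 6 - 2 * t 1 3 4 - 2 * t 1 5 6) / 6, (t 0 3 6 + t 0 4 5 - 2 * t 2 3 4 - 2 * t 2 5 6) / 6, (t 0 1 5 - t 0 2 6 - 2 * t 1 2 3 - 2 * t 3 5 6) / 6, (- t 0 1 6 - t 0 2 5 - 2 * t 1 2 4 - 2 * t 4 5 6) / 6, (- t 0 1 3 + t 0 2 4 - 2 * t 1 2 5 - 2 * t 3 4 5) / 6, (t 0 1 4 + t 0 2 3 - 2 * t 1 2 6 - 2 * t 3 4 6) / 6;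
    (- 2 * t 0 3 5 + 2 * t 0 4 6 - t 1 3 4 - t 1 5 6) / 6, (- 2 * t 0 1 2 + t 0 3 4 + t 0 5 6 - 2 * t 1 3 5 + 2 * t 1 4 6 - t 2 3 6 - t 2 4 5) / 6, (t 1 3 6 + t 1 4 5 - 2 * t 2 3 5 + 2 * t 2 4 6) / 6, (- t 0 1 4 + 2 * t 0 2 3 - t 1 2 6 + 2 * t 3 4 6) / 6, (t 0 1 3 + 2 * t 0 2 4 - t 1 2 5 + 2 * t 3 4 5) / 6, (- t 0 1 6 + 2 * t 0 2 5 + t 1 2 4 - 2 * t 4 5 6) / 6, (t 0 1 5 + 2 * t 0 2 6 + t 1 2 3 - 2 * t 3 5 6) / 6;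
    (2 * t 0 3 6 + 2 * t 0 4 5 - t 2 3 4 - t 2 5 6) / 6, (2 * t 1 3 6 + 2 * t 1 4 5 - t 2 3 5 + t 2 4 6) / 6, (- 2 * t 0 1 2 + t 0 3 4 + t 0 5 6 + t 1 3 5 - t 1 4 6 + 2 * t 2 3 6 + 2 * t 2 4 5) / 6, (- 2 * t 0 1 3 - t 0 2 4 - t 1 2 5 + 2 * t 3 4 5) / 6, (- 2 * t 0 1 4 + t 0 2 3 + t 1 2 6 - 2 * t 3 4 6) / 6, (- 2 * t 0 1 5 - t 0 2 6 + t 1 2 3 - 2 * t 3 5 6) / 6, (- 2 * t 0 1 6 + t 0 2 5 - t 1 2 4 + 2 * t 4 5 6) / 6;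
    (2 * t 0 1 5 - 2 * t 0 2 6 - t 1 2 3 - t 3 5 6) / 6, (- 2 * t 0 1 4 + t 0 2 3 - 2 * t 1 2 6 + t 3 4 6) / 6, (- t 0 1 3 - 2 * t 0 2 4 - 2 * t 1 2 5 + t 3 4 5) / 6, (t 0 1 2 - 2 * t 0 3 4 + t 0 5 6 - 2 * t 1 3 5 - t 1 4 6 + 2 * t 2 3 6 - t 2 4 5) / 6, (t 1 3 6 - 2 * t 1 4 5 + t 2 3 5 + 2 * t 2 4 6) / 6, (- t 0 3 6 + 2 * t 0 4 5 - t 2 3 4 + 2 * t 2 5 6) / 6, (t 0 3 5 + 2 * t 0 4 6 - t 1 3 4 + 2 * t 1 5 6) / 6;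
    (- 2 * t 0 1 6 - 2 * t 0 2 5 - t 1 2 4 - t 4 5 6) / 6, (2 * t 0 1 3 + t 0 2 4 - 2 * t 1 2 5 + t 3 4 5) / 6, (- t 0 1 4 + 2 * t 0 2 3 + 2 * t 1 2 6 - t 3 4 6) / 6, (2 * t 1 3 6 - t 1 4 5 + 2 * t 2 3 5 + t 2 4 6) / 6, (t 0 1 2 - 2 * t 0 3 4 + t 0 5 6 + t 1 3 5 + 2 * t 1 4 6 - t 2 3 6 + 2 * t 2 4 5) / 6, (- 2 * t 0 3 5 - t 0 4 6 - t 1 3 4 + 2 * t 1 5 6) / 6, (- 2 * t 0 3 6 + t 0 4 5 + t 2 3 4 - 2 * t 2 5 6) / 6;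
    (- 2 * t 0 1 3 + 2 * t 0 2 4 - t 1 2 5 - t 3 4 5) / 6, (- 2 * t 0 1 6 + t 0 2 5 + 2 * t 1 2 4 - t 4 5 6) / 6, (- t 0 1 5 - 2 * t 0 2 6 + 2 * t 1 2 3 - t 3 5 6) / 6, (- 2 * t 0 3 6 + t 0 4 5 - 2 * t 2 3 4 + t 2 5 6) / 6, (- t 0 3 5 - 2 * t 0 4 6 - 2 * t 1 3 4 + t 1 5 6) / 6, (t 0 1 2 + t 0 3 4 - 2 * t 0 5 6 - 2 * t 1 3 5 - t 1 4 6 - t 2 3 6 + 2 * t 2 4 5) / 6, (- 2 * t 1 3 6 + t 1 4 5 + t 2 3 5 + 2 * t 2 4 6) / 6;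
    (2 * t 0 1 4 + 2 * t 0 2 3 - t 1 2 6 - t 3 4 6) / 6, (2 * t 0 1 5 + t 0 2 6 + 2 * t 1 2 3 - t 3 5 6) / 6, (- t 0 1 6 + 2 * t 0 2 5 - 2 * t 1 2 4 + t 4 5 6) / 6, (2 * t 0 3 5 + t 0 4 6 - 2 * t 1 3 4 + t 1 5 6) / 6, (- t 0 3 6 + 2 * t 0 4 5 + 2 * t 2 3 4 - t 2 5 6) / 6, (- t 1 3 6 + 2 * t 1 4 5 + 2 * t 2 3 5 + t 2 4 6) / 6, (t 0 1 2 + t 0 3 4 - 2 * t 0 5 6 + t 1 3 5 + 2 * t 1 4 6 + 2 * t 2 3 6 - t 2 4 5) / 6]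

lemma phi0_apply (u v w : Fin 7 → ℝ) :
    phi0 ![u, v, w] = u 0 * v 1 * w 2 - u 0 * v 2 * w 1 - u 1 * v 0 * w 2 + u 1 * v 2 * w 0 + u 2 * v 0 * w 1 - u 2 * v 1 * w 0 + u 0 * v 3 * w 4 - u 0 * v 4 * w 3 - u 3 * v 0 * w 4 + u 3 * v 4 * w 0 + u 4 * v 0 * w 3 - u 4 * v 3 * w 0 + u 0 * v 5 * w 6 - u 0 * v 6 * w 5 - u 5 * v 0 * w 6 + u 5 * v 6 * w 0 + u 6 * v 0 * w 5 - u 6 * v 5 * w 0 + u 1 * v 3 * w 5 - u 1 * v 5 * w 3 - u 3 * v 1 * w 5 + u 3 * v 5 * w 1 + u 5 * v 1 * w 3 - u 5 * v 3 * w 1 - u 1 * v 4 * w 6 + u 1 * v 6 * w 4 + u 4 * v 1 * w 6 - u 4 * v 6 * w 1 - u 6 * v 1 * w 4 + u 6 * v 4 * w 1 - u 2 * v 3 * w 6 + u 2 * v 6 * w 3 + u 3 * v 2 * w 6 - u 3 * v 6 * w 2 - u 6 * v 2 * w 3 + u 6 * v 3 * w 2 - u 2 * v 4 * w 5 + u 2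 * v 5 * w 4 + u 4 * v 2 * w 5 - u 4 * v 5 * w 2 - u 5 * v 2 * w 4 + u 5 * v 4 * w 2 := by
  simp only [phi0, AlternatingMap.sub_apply, AlternatingMap.add_apply, d3_apply]
  ring

lemma solM_00 (t : Fin 7 → Fin 7 → Fin 7 → ℝ) : solM t 0 0 = (- 2 * t 0 1 2 - 2 * t 0 3 4 - 2 * t 0 5 6 + t 1 3 5 - t 1 4 6 - t 2 3 6 - t 2 4 5) / 6 := by
  rfl

lemma solM_01 (t : Fin 7 → Fin 7 → Fin 7 → ℝ) : solM t 0 1 = (- t 0 3 5 + t 0 4 6 - 2 * t 1 3 4 - 2 * t 1 5 6) / 6 := by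
  rfl

lemma solM_02 (t : Fin 7 → Fin 7 → Fin 7 → ℝ) : solM t 0 2 = (t 0 3 6 + t 0 4 5 - 2 * t 2 3 4 - 2 * t 2 5 6) / 6 := by
  rfl

lemma solM_03 (t : Fin 7 → Fin 7 → Fin 7 → ℝ) : solM t 0 3 = (t 0 1 5 - t 0 2 6 - 2 * t 1 2 3 - 2 * t 3 5 6) / 6 := by
  rfl

lemma solM_04 (t : Fin 7 → Fin 7 → Fin 7 → ℝ) : solM t 0 4 = (- t 0 1 6 - t 0 2 5 - 2 * t 1 2 4 - 2 * t 4 5 6) / 6 := by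
  rfl

lemma solM_05 (t : Fin 7 → Fin 7 → Fin 7 → ℝ) : solM t 0 5 = (- t 0 1 3 + t 0 2 4 - 2 * t 1 2 5 - 2 * t 3 4 5) / 6 := by
  rfl

lemma solM_06 (t : Fin 7 → Fin 7 → Fin 7 → ℝ) : solM t 0 6 = (t 0 1 4 + t 0 2 3 - 2 * t 1 2 6 - 2 * t 3 4 6) / 6 := by
  rfl

lemma solM_10 (t : Fin 7 → Fin 7 → Fin 7 → ℝ) : solM t 1 0 = (- 2 * t 0 3 5 + 2 * t 0 4 6 - t 1 3 4 - t 1 5 6) / 6 := by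
  rfl

lemma solM_11 (t : Fin 7 → Fin 7 → Fin 7 → ℝ) : solM t 1 1 = (- 2 * t 0 1 2 + t 0 3 4 + t 0 5 6 - 2 * t 1 3 5 + 2 * t 1 4 6 - t 2 3 6 - t 2 4 5) / 6 := by
  rfl

lemma solM_12 (t : Fin 7 → Fin 7 → Fin 7 → ℝ) : solM t 1 2 = (t 1 3 6 + t 1 4 5 - 2 * t 2 3 5 + 2 * t 2 4 6) / 6 := by
  rfl

lemma solM_13 (t : Fin 7 → Fin 7 → Fin 7 → ℝ) : solM t 1 3 = (- t 0 1 4 + 2 * t 0 2 3 - t 1 2 6 + 2 * t 3 4 6) / 6 := by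
  rfl

lemma solM_14 (t : Fin 7 → Fin 7 → Fin 7 → ℝ) : solM t 1 4 = (t 0 1 3 + 2 * t 0 2 4 - t 1 2 5 + 2 * t 3 4 5) / 6 := by
  rfl

lemma solM_15 (t : Fin 7 → Fin 7 → Fin 7 → ℝ) : solM t 1 5 = (- t 0 1 6 + 2 * t 0 2 5 + t 1 2 4 - 2 * t 4 5 6) / 6 := by
  rfl

lemma solM_16 (t : Fin 7 → Fin 7 → Fin 7 → ℝ) : solM t 1 6 = (t 0 1 5 + 2 * t 0 2 6 + t 1 2 3 - 2 * t 3 5 6) / 6 := by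
  rfl

lemma solM_20 (t : Fin 7 → Fin 7 → Fin 7 → ℝ) : solM t 2 0 = (2 * t 0 3 6 + 2 * t 0 4 5 - t 2 3 4 - t 2 5 6) / 6 := by
  rfl

lemma solM_21 (t : Fin 7 → Fin 7 → Fin 7 → ℝ) : solM t 2 1 = (2 * t 1 3 6 + 2 * t 1 4 5 - t 2 3 5 + t 2 4 6) / 6 := by
  rfl

lemma solM_22 (t : Fin 7 → Fin 7 → Fin 7 → ℝ) : solM t 2 2 = (- 2 * t 0 1 2 + t 0 3 4 + t 0 5 6 + t 1 3 5 - t 1 4 6 + 2 * t 2 3 6 + 2 * t 2 4 5) / 6 := by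
  rfl

lemma solM_23 (t : Fin 7 → Fin 7 → Fin 7 → ℝ) : solM t 2 3 = (- 2 * t 0 1 3 - t 0 2 4 - t 1 2 5 + 2 * t 3 4 5) / 6 := by
  rfl

lemma solM_24 (t : Fin 7 → Fin 7 → Fin 7 → ℝ) : solM t 2 4 = (- 2 * t 0 1 4 + t 0 2 3 + t 1 2 6 - 2 * t 3 4 6) / 6 := by
  rfl

lemma solM_25 (t : Fin 7 → Fin 7 → Fin 7 → ℝ) : solM t 2 5 = (- 2 * t 0 1 5 - t 0 2 6 + t 1 2 3 - 2 * t 3 5 6) / 6 := by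
  rfl

lemma solM_26 (t : Fin 7 → Fin 7 → Fin 7 → ℝ) : solM t 2 6 = (- 2 * t 0 1 6 + t 0 2 5 - t 1 2 4 + 2 * t 4 5 6) / 6 := by
  rfl

lemma solM_30 (t : Fin 7 → Fin 7 → Fin 7 → ℝ) : solM t 3 0 = (2 * t 0 1 5 - 2 * t 0 2 6 - t 1 2 3 - t 3 5 6) / 6 := by
  rfl

lemma solM_31 (t : Fin 7 → Fin 7 → Fin 7 → ℝ) : solM t 3 1 = (- 2 * t 0 1 4 + t 0 2 3 - 2 * t 1 2 6 + t 3 4 6) / 6 := by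
  rfl

lemma solM_32 (t : Fin 7 → Fin 7 → Fin 7 → ℝ) : solM t 3 2 = (- t 0 1 3 - 2 * t 0 2 4 - 2 * t 1 2 5 + t 3 4 5) / 6 := by
  rfl

lemma solM_33 (t : Fin 7 → Fin 7 → Fin 7 → ℝ) : solM t 3 3 = (t 0 1 2 - 2 * t 0 3 4 + t 0 5 6 - 2 * t 1 3 5 - t 1 4 6 + 2 * t 2 3 6 - t 2 4 5) / 6 := by
  rfl

lemma solM_34 (t : Fin 7 → Fin 7 → Fin 7 → ℝ) : solM t 3 4 = (t 1 3 6 - 2 * t 1 4 5 + t 2 3 5 + 2 * t 2 4 6) / 6 := by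
  rfl

lemma solM_35 (t : Fin 7 → Fin 7 → Fin 7 → ℝ) : solM t 3 5 = (- t 0 3 6 + 2 * t 0 4 5 - t 2 3 4 + 2 * t 2 5 6) / 6 := by
  rfl

lemma solM_36 (t : Fin 7 → Fin 7 → Fin 7 → ℝ) : solM t 3 6 = (t 0 3 5 + 2 * t 0 4 6 - t 1 3 4 + 2 * t 1 5 6) / 6 := by
  rfl

lemma solM_40 (t : Fin 7 → Fin 7 → Fin 7 → ℝ) : solM t 4 0 = (- 2 * t 0 1 6 - 2 * t 0 2 5 - t 1 2 4 - t 4 5 6) / 6 := by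
  rfl

lemma solM_41 (t : Fin 7 → Fin 7 → Fin 7 → ℝ) : solM t 4 1 = (2 * t 0 1 3 + t 0 2 4 - 2 * t 1 2 5 + t 3 4 5) / 6 := by
  rfl

lemma solM_42 (t : Fin 7 → Fin 7 → Fin 7 → ℝ) : solM t 4 2 = (- t 0 1 4 + 2 * t 0 2 3 + 2 * t 1 2 6 - t 3 4 6) / 6 := by
  rfl

lemma solM_43 (t : Fin 7 → Fin 7 → Fin 7 → ℝ) : solM t 4 3 = (2 * t 1 3 6 - t 1 4 5 + 2 * t 2 3 5 + t 2 4 6) / 6 := by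
  rfl

lemma solM_44 (t : Fin 7 → Fin 7 → Fin 7 → ℝ) : solM t 4 4 = (t 0 1 2 - 2 * t 0 3 4 + t 0 5 6 + t 1 3 5 + 2 * t 1 4 6 - t 2 3 6 + 2 * t 2 4 5) / 6 := by
  rfl

lemma solM_45 (t : Fin 7 → Fin 7 → Fin 7 → ℝ) : solM t 4 5 = (- 2 * t 0 3 5 - t 0 4 6 - t 1 3 4 + 2 * t 1 5 6) / 6 := by
  rfl

lemma solM_46 (t : Fin 7 → Fin 7 → Fin 7 → ℝ) : solM t 4 6 = (- 2 * t 0 3 6 + t 0 4 5 + t 2 3 4 - 2 * t 2 5 6) / 6 := by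
  rfl

lemma solM_50 (t : Fin 7 → Fin 7 → Fin 7 → ℝ) : solM t 5 0 = (- 2 * t 0 1 3 + 2 * t 0 2 4 - t 1 2 5 - t 3 4 5) / 6 := by
  rfl

lemma solM_51 (t : Fin 7 → Fin 7 → Fin 7 → ℝ) : solM t 5 1 = (- 2 * t 0 1 6 + t 0 2 5 + 2 * t 1 2 4 - t 4 5 6) / 6 := by
  rfl

lemma solM_52 (t : Fin 7 → Fin 7 → Fin 7 → ℝ) : solM t 5 2 = (- t 0 1 5 - 2 * t 0 2 6 + 2 * t 1 2 3 - t 3 5 6) / 6 := by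
  rfl

lemma solM_53 (t : Fin 7 → Fin 7 → Fin 7 → ℝ) : solM t 5 3 = (- 2 * t 0 3 6 + t 0 4 5 - 2 * t 2 3 4 + t 2 5 6) / 6 := by
  rfl

lemma solM_54 (t : Fin 7 → Fin 7 → Fin 7 → ℝ) : solM t 5 4 = (- t 0 3 5 - 2 * t 0 4 6 - 2 * t 1 3 4 + t 1 5 6) / 6 := by
  rfl

lemma solM_55 (t : Fin 7 → Fin 7 → Fin 7 → ℝ) : solM t 5 5 = (t 0 1 2 + t 0 3 4 - 2 * t 0 5 6 - 2 * t 1 3 5 - t 1 4 6 - t 2 3 6 + 2 * t 2 4 5) / 6 := by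
  rfl

lemma solM_56 (t : Fin 7 → Fin 7 → Fin 7 → ℝ) : solM t 5 6 = (- 2 * t 1 3 6 + t 1 4 5 + t 2 3 5 + 2 * t 2 4 6) / 6 := by
  rfl

lemma solM_60 (t : Fin 7 → Fin 7 → Fin 7 → ℝ) : solM t 6 0 = (2 * t 0 1 4 + 2 * t 0 2 3 - t 1 2 6 - t 3 4 6) / 6 := by
  rfl

lemma solM_61 (t : Fin 7 → Fin 7 → Fin 7 → ℝ) : solM t 6 1 = (2 * t 0 1 5 + t 0 2 6 + 2 * t 1 2 3 - t 3 5 6) / 6 := by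
  rfl

lemma solM_62 (t : Fin 7 → Fin 7 → Fin 7 → ℝ) : solM t 6 2 = (- t 0 1 6 + 2 * t 0 2 5 - 2 * t 1 2 4 + t 4 5 6) / 6 := by
  rfl

lemma solM_63 (t : Fin 7 → Fin 7 → Fin 7 → ℝ) : solM t 6 3 = (2 * t 0 3 5 + t 0 4 6 - 2 * t 1 3 4 + t 1 5 6) / 6 := by
  rfl

lemma solM_64 (t : Fin 7 → Fin 7 → Fin 7 → ℝ) : solM t 6 4 = (- t 0 3 6 + 2 * t 0 4 5 + 2 * t 2 3 4 - t 2 5 6) / 6 := by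
  rfl

lemma solM_65 (t : Fin 7 → Fin 7 → Fin 7 → ℝ) : solM t 6 5 = (- t 1 3 6 + 2 * t 1 4 5 + 2 * t 2 3 5 + t 2 4 6) / 6 := by
  rfl

lemma solM_66 (t : Fin 7 → Fin 7 → Fin 7 → ℝ) : solM t 6 6 = (t 0 1 2 + t 0 3 4 - 2 * t 0 5 6 + t 1 3 5 + 2 * t 1 4 6 + 2 * t 2 3 6 - t 2 4 5) / 6 := by
  rfl

set_option maxHeartbeats 1600000 in
/-- The infinitesimal action `gl(7,ℝ) → Λ³(ℝ⁷)*`,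
`A ↦ −(φ₀(A·,·,·) + φ₀(·,A·,·) + φ₀(·,·,A·))`, is surjective: every 3-form on ℝ⁷
arises this way.  (Consequently the `GL(7,ℝ)`-orbit of `φ₀` is open in `Λ³(ℝ⁷)*`.) -/
theorem g2_infinitesimal_action_surjective
    (τ : AlternatingMap ℝ (Fin 7 → ℝ) ℝ (Fin 3)) :
    ∃ A : Module.End ℝ (Fin 7 → ℝ), ∀ u v w : Fin 7 → ℝ,
      τ ![u, v, w] =
        -(phi0 ![A u, v, w] + phi0 ![u, A v, w] + phi0 ![u, v, A w]) := by

  classical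
  set t : Fin 7 → Fin 7 → Fin 7 → ℝ :=
    fun a b c => τ ![Pi.single a 1, Pi.single b 1, Pi.single c 1] with ht
  refine ⟨(solM t).mulVecLin, fun u v w => ?_⟩
  have key : τ = -(Dalt ((solM t).mulVecLin) phi0) := by
    apply ext_sorted
    intro a b c hab hbc
    rw [AlternatingMap.neg_apply, Dalt_apply, mulVecLin_single, mulVecLin_single,
      mulVecLin_single, phi0_apply, phi0_apply, phi0_apply]
    show t a b c = _
    fin_cases a <;> fin_cases b <;> fin_cases c <;>
      first
        | exact absurd hab (by decide)
        | exact absurd hbc (by decide)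
        | (simp (config := { decide := true }) only [Fin.reduceFinMk, Pi.single_apply, if_true, if_false,
             mul_zero, zero_mul, mul_one, one_mul, add_zero, zero_add, sub_zero, zero_sub,
             neg_zero]
           simp only [Fin.reduceFinMk, solM_00, solM_01, solM_02, solM_03, solM_04, solM_05, solM_06, solM_10, solM_11, solM_12, solM_13, solM_14, solM_15, solM_16, solM_20, solM_21, solM_22, solM_23, solM_24, solM_25, solM_26, solM_30, solM_31, solM_32, solM_33, solM_34, solM_35, solM_36, solM_40, solM_41, solM_42, solM_43, solM_44, solM_45, solM_46, solM_50, solM_51, solM_52, solM_53, solM_54, solM_55, solM_56, solM_60, solM_61, solM_62, solM_63, solM_64, solM_65, solM_66]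
           ring)
  rw [key, AlternatingMap.neg_apply, Dalt_apply]
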